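/- Let k be a field complete with respect to a nontrivial discrete non-Archimedean absolute value and let V be a finite-dimensional k-vector space. Then every non-zero (non-Archimedean) seminorm x on V is diagonalizable: there exists a basis (e₀, …, e_d) of V such that |Σᵢ aᵢ eᵢ|(x) = maxᵢ |aᵢ|·|eᵢ|(x) for all scalars aᵢ ∈ k. -/

import Mathlib

open Module Submodule Finset

universe u

section Aux

variable {k : Type*} [NontriviallyNormedField k]

private lemma finite_zpow_set {q r lo hi : NNReal} (hq : 1 < q) (hr : 0 < r) (hlo : 0 < lo) :
    {m : ℤ | lo ≤ q ^ m * r ∧ q ^ m * r ≤ hi}.Finite := by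
  have hq0 : 0 < q := lt_trans zero_lt_one hq
  obtain ⟨N, hN⟩ : ∃ n : ℕ, hi / r < q ^ n := pow_unbounded_of_one_lt _ hq
  obtain ⟨M, hM⟩ : ∃ n : ℕ, (lo / r)⁻¹ < q ^ n := pow_unbounded_of_one_lt _ hq
  have hmono : StrictMono fun m : ℤ => q ^ m := zpow_right_strictMono₀ hq
  apply (Set.finite_Icc (-(M : ℤ)) (N : ℤ)).subset
  rintro m ⟨h1, h2⟩
  have hup : q ^ m ≤ hi / r := by
    rw [le_div_iff₀ hr]
    exact h2
  have hdown : lo / r ≤ q ^ m := by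
    rw [div_le_iff₀ hr]
    exact h1
  have hlor : 0 < lo / r := by positivity
  constructor
  · have : q ^ (-(M : ℤ)) < q ^ m := by
      rw [zpow_neg, zpow_natCast]
      calc (q ^ M)⁻¹ < lo / r := by
            rw [inv_lt_comm₀ (by positivity) hlor]
            exact hM
        _ ≤ q ^ m := hdown
    exact le_of_lt (hmono.lt_iff_lt.mp this)
  · have : q ^ m < q ^ (N : ℤ) := by
      rw [zpow_natCast]
      exact lt_of_le_of_lt hup hN
    exact le_of_lt (hmono.lt_iff_lt.mp this)

private lemma sup_univ_succ' {α : Type*} [SemilatticeSup α] [OrderBot α] {n : ℕ}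
    (f : Fin (n + 1) → α) :
    Finset.univ.sup f = f 0 ⊔ Finset.univ.sup (f ∘ Fin.succ) := by
  rw [Fin.univ_succ, Finset.sup_cons, Finset.sup_map]
  rfl

private theorem diag_step
    {V : Type u} [AddCommGroup V] [Module k V] [FiniteDimensional k V]
    {n : ℕ} (x : V → NNReal)
    (hrank : finrank k V = n + 1)
    (H : Submodule k V) (hHrank : finrank k ↥H = n)
    (u : V) (hu : u ∉ H)
    (bH : Basis (Fin n) k ↥H)
    (hbH : ∀ c : Fin n → k, x ↑(∑ i, c i • bH i) =
      Finset.univ.sup (fun i => ‖c i‖₊ * x ↑(bH i)))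
    (hkey : ∀ (a : k) (h : V), h ∈ H → x (a • u + h) = max (‖a‖₊ * x u) (x h)) :
    ∃ b : Basis (Fin (n + 1)) k V, ∀ c : Fin (n + 1) → k,
      x (∑ i, c i • b i) = Finset.univ.sup (fun i => ‖c i‖₊ * x (b i)) := by
  set e : Fin (n + 1) → V := Fin.cons u (fun i => ↑(bH i)) with he
  have hspanH : Submodule.span k (Set.range fun i : Fin n => (↑(bH i) : V)) = H := by
    have : (fun i : Fin n => (↑(bH i) : V)) = H.subtype ∘ bH := rfl
    rw [this, Set.range_comp, ← Submodule.map_span, bH.span_eq, Submodule.map_top,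
      Submodule.range_subtype]
  have hspan : ⊤ ≤ Submodule.span k (Set.range e) := by
    rw [he, Fin.range_cons, Submodule.span_insert, hspanH]
    have hlt : H < Submodule.span k {u} ⊔ H := by
      refine lt_of_le_of_ne le_sup_right (fun hEq => hu ?_)
      rw [hEq]
      exact SetLike.le_def.mp le_sup_left (Submodule.mem_span_singleton_self u)
    have h1 : n < finrank k ↥(Submodule.span k {u} ⊔ H) := by
      rw [← hHrank]
      exact Submodule.finrank_lt_finrank_of_lt hlt
    have h2 : finrank k ↥(Submodule.span k {u} ⊔ H) ≤ n + 1 := hrank ▸ (Submodule.span k {u} ⊔ H).finrank_le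
    have := Submodule.eq_top_of_finrank_eq (S := Submodule.span k {u} ⊔ H) (by omega : finrank k ↥(Submodule.span k {u} ⊔ H) = finrank k V)
    rw [this]
  have hcard : Fintype.card (Fin (n + 1)) = finrank k V := by simp [hrank]
  refine ⟨basisOfTopLeSpanOfCardEqFinrank e hspan hcard, ?_⟩
  have hb : ⇑(basisOfTopLeSpanOfCardEqFinrank e hspan hcard) = e :=
    coe_basisOfTopLeSpanOfCardEqFinrank e hspan hcard
  intro c
  rw [hb]
  have hsum : ∑ i, c i • e i = c 0 • u + ↑(∑ i : Fin n, c i.succ • bH i) := by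
    rw [Fin.sum_univ_succ]
    simp [he]
  have hmem : (↑(∑ i : Fin n, c i.succ • bH i) : V) ∈ H := Submodule.coe_mem _
  rw [hsum, hkey (c 0) _ hmem, hbH (fun i => c i.succ)]
  have hL : (fun i : Fin (n+1) => ‖c i‖₊ * x (e i)) 0 = ‖c 0‖₊ * x u := by
    simp [he]
  have hR : ((fun i : Fin (n+1) => ‖c i‖₊ * x (e i)) ∘ Fin.succ) =
      fun i : Fin n => ‖c i.succ‖₊ * x ↑(bH i) := by
    funext i
    simp [he, Function.comp]
  rw [sup_univ_succ' (fun i : Fin (n+1) => ‖c i‖₊ * x (e i)), hR]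
  simp [he]

end Aux

section Main

variable {k : Type*} [NontriviallyNormedField k] [CompleteSpace k]

private theorem diag_rec
    (hdisc : ∃ q : ℝ, 1 < q ∧ ∀ a : k, a ≠ 0 → ∃ m : ℤ, ‖a‖ = q ^ m) :
    ∀ (n : ℕ) (V : Type u) [AddCommGroup V] [Module k V] [FiniteDimensional k V]
      (x : V → NNReal),
      (∀ (a : k) (v : V), x (a • v) = ‖a‖₊ * x v) →
      (∀ v w : V, x (v + w) ≤ max (x v) (x w)) →
      finrank k V = n →
      ∃ b : Basis (Fin n) k V, ∀ c : Fin n → k,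
        x (∑ i, c i • b i) = Finset.univ.sup (fun i => ‖c i‖₊ * x (b i)) := by
  intro n
  induction n with
  | zero =>
    intro V _ _ _ x hsmul hmax hrank
    haveI : Subsingleton V := Module.finrank_zero_iff.mp hrank
    refine ⟨Basis.empty V, fun c => ?_⟩
    have h0 : x 0 = 0 := by simpa using hsmul 0 0
    simp [h0]
  | succ n IH =>
    intro V _ _ _ x hsmul hmax hrank
    have hx0 : x 0 = 0 := by simpa using hsmul 0 0
    have hneg : ∀ v : V, x (-v) = x v := by
      intro v
      have := hsmul (-1) v
      simpa using this
    by_cases hker : ∃ w : V, w ≠ 0 ∧ x w = 0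
    · -- kernel nontrivial case
      obtain ⟨w, hw0, hxw⟩ := hker
      obtain ⟨H, hcompl⟩ := Submodule.exists_isCompl (Submodule.span k {w})
      have hrk1 : finrank k ↥(Submodule.span k {w}) = 1 := finrank_span_singleton hw0
      have hH : finrank k ↥H = n := by
        have := Submodule.finrank_add_eq_of_isCompl hcompl
        omega
      have hwH : w ∉ H := by
        intro hmem
        exact hw0 ((Submodule.disjoint_def.mp hcompl.disjoint) w
          (Submodule.mem_span_singleton_self w) hmem)
      obtain ⟨bH, hbH⟩ := IH ↥H (fun h => x ↑h)
        (fun a v => by exact_mod_cast hsmul a (↑v : V))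
        (fun v w => by exact_mod_cast hmax (↑v : V) (↑w : V)) hH
      have hkey : ∀ (a : k) (h : V), h ∈ H → x (a • w + h) = max (‖a‖₊ * x w) (x h) := by
        intro a h _
        have haw : x (a • w) = 0 := by rw [hsmul, hxw, mul_zero]
        have h1 : x (a • w + h) ≤ x h := by
          have := hmax (a • w) h
          rwa [haw, max_eq_right (zero_le : (0 : NNReal) ≤ _)] at this
        have h2 : x h ≤ x (a • w + h) := by
          have e1 : h = (a • w + h) + -(a • w) := by abel
          calc x h = x ((a • w + h) + -(a • w)) := by rw [← e1]
            _ ≤ max (x (a • w + h)) (x (-(a • w))) := hmax _ _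
            _ = x (a • w + h) := by rw [hneg, haw, max_eq_left (zero_le : (0 : NNReal) ≤ _)]
        rw [hxw, mul_zero, max_eq_right (zero_le : (0 : NNReal) ≤ _)]
        exact le_antisymm h1 h2
      exact diag_step x hrank H hH w hwH bH hbH hkey
    · -- norm case
      push_neg at hker
      have hker' : ∀ v : V, x v = 0 → v = 0 := by
        intro v hv
        by_contra h0
        exact hker v h0 hv
      letI : NormedAddCommGroup V := AddGroupNorm.toNormedAddCommGroup
        { toFun := fun v => (x v : ℝ)
          map_zero' := by simp [hx0]
          add_le' := fun v w => by
            have h1 : (x (v + w) : ℝ) ≤ max (x v : ℝ) (x w : ℝ) := by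
              exact_mod_cast hmax v w
            exact h1.trans (max_le (le_add_of_nonneg_right (x w).coe_nonneg)
              (le_add_of_nonneg_left (x v).coe_nonneg))
          neg' := fun v => by simp [hneg]
          eq_zero_of_map_eq_zero' := fun v hv =>
            hker' v (by exact_mod_cast (show (x v : ℝ) = 0 from hv)) }
      have hnorm : ∀ v : V, ‖v‖ = (x v : ℝ) := fun _ => rfl
      letI : NormedSpace k V :=
        { norm_smul_le := fun a v => by
            rw [hnorm, hnorm, hsmul]
            push_cast
            simp }
      -- choose a hyperplane H and v ∉ H
      let b0 : Basis (Fin (n + 1)) k V := (Module.finBasis k V).reindex (finCongr hrank)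
      set v : V := b0 0 with hv
      set H : Submodule k V := Submodule.span k (Set.range (⇑b0 ∘ Fin.succ)) with hHdef
      have hrange : Set.range (⇑b0 ∘ Fin.succ) = b0 '' (Set.range Fin.succ) :=
        Set.range_comp _ _
      have hvH : v ∉ H := by
        rw [hHdef, hrange]
        exact b0.linearIndependent.notMem_span_image (by
          simp [Fin.succ_ne_zero, eq_comm])
      have hH : finrank k ↥H = n := by
        rw [hHdef]
        rw [finrank_span_eq_card (b0.linearIndependent.comp Fin.succ (Fin.succ_injective n))]
        simp
      obtain ⟨bH, hbH⟩ := IH ↥H (fun h => x ↑h)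
        (fun a v => by exact_mod_cast hsmul a (↑v : V))
        (fun v w => by exact_mod_cast hmax (↑v : V) (↑w : V)) hH
      -- H is closed, distance positive
      have hclosed : IsClosed (H : Set V) := Submodule.closed_of_finiteDimensional H
      have hd : 0 < Metric.infDist v (H : Set V) := by
        rcases lt_or_eq_of_le (Metric.infDist_nonneg (s := (H : Set V)) (x := v)) with h | h
        · exact h
        · exfalso
          apply hvH
          have : v ∈ closure (H : Set V) :=
            (Metric.mem_closure_iff_infDist_zero ⟨0, H.zero_mem⟩).mpr h.symm
          rwa [hclosed.closure_eq] at this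
      -- existence of minimizer
      have hlo_le : ∀ h ∈ H, (⟨Metric.infDist v (H : Set V), Metric.infDist_nonneg⟩ : NNReal) ≤ x (v - h) := by
        intro h hh
        have h1 : Metric.infDist v (H : Set V) ≤ dist v h := Metric.infDist_le_dist_of_mem hh
        rw [dist_eq_norm, hnorm] at h1
        exact_mod_cast h1
      set lo : NNReal := ⟨Metric.infDist v (H : Set V), Metric.infDist_nonneg⟩ with hlodef
      have hlo0 : 0 < lo := by exact_mod_cast hd
      have hmin : ∃ h₀ ∈ H, ∀ h ∈ H, x (v - h₀) ≤ x (v - h) := by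
        by_contra hno
        push_neg at hno
        obtain ⟨q, hq1, hq⟩ := hdisc
        set qn : NNReal := ⟨q, le_of_lt (lt_trans zero_lt_one hq1)⟩ with hqndef
        have hqn1 : 1 < qn := by exact_mod_cast hq1
        have hqmem : ∀ a : k, a ≠ 0 → ∃ m : ℤ, ‖a‖₊ = qn ^ m := by
          intro a ha
          obtain ⟨m, hm⟩ := hq a ha
          refine ⟨m, NNReal.coe_injective ?_⟩
          rw [coe_nnnorm, NNReal.coe_zpow]
          exact hm
        set F : Set NNReal := {s | (∃ h ∈ H, x (v - h) = s) ∧ s ≤ x v} with hFdef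
        have hFne : F.Nonempty := ⟨x v, ⟨⟨0, H.zero_mem, by rw [sub_zero]⟩, le_rfl⟩⟩
        have hFlo : ∀ s ∈ F, lo ≤ s := by
          rintro s ⟨⟨h, hh, rfl⟩, _⟩
          exact hlo_le h hh
        have hFD : ∀ s ∈ F, ∃ i : Fin n, ∃ m : ℤ, s = qn ^ m * x ↑(bH i) := by
          rintro s ⟨⟨h, hh, rfl⟩, hle⟩
          obtain ⟨h', hh', hlt⟩ := hno h hh
          have hslo : 0 < x (v - h) := lt_of_lt_of_le hlo0 (hlo_le h hh)
          -- x (h' - h) = x (v - h)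
          have e1 : v - h = (v - h') + (h' - h) := by abel
          have e2 : h' - h = (v - h) + -(v - h') := by abel
          have le1 : x (v - h) ≤ x (h' - h) := by
            have := hmax (v - h') (h' - h)
            rw [← e1] at this
            rcases max_cases (x (v - h')) (x (h' - h)) with ⟨hm, _⟩ | ⟨hm, _⟩
            · rw [hm] at this; exact absurd (lt_of_le_of_lt this hlt) (lt_irrefl _)
            · rwa [hm] at this
          have le2 : x (h' - h) ≤ x (v - h) := by
            calc x (h' - h) = x ((v - h) + -(v - h')) := by rw [← e2]
              _ ≤ max (x (v - h)) (x (-(v - h'))) := hmax _ _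
              _ = x (v - h) := by rw [hneg]; exact max_eq_left (le_of_lt hlt)
          have heq : x (h' - h) = x (v - h) := le_antisymm le2 le1
          set g : ↥H := ⟨h' - h, H.sub_mem hh' hh⟩ with hgdef
          have hgx : x ↑g = x (v - h) := heq
          have hrepr : ∑ i, bH.repr g i • bH i = g := bH.sum_repr g
          have hsup : x (v - h) = Finset.univ.sup (fun i => ‖bH.repr g i‖₊ * x ↑(bH i)) := by
            have h3 := hbH (fun i => bH.repr g i)
            rw [hrepr] at h3
            rw [← hgx]
            exact h3
          have hne : (Finset.univ : Finset (Fin n)).Nonempty := by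
            by_contra hemp
            rw [Finset.not_nonempty_iff_eq_empty] at hemp
            rw [hemp, Finset.sup_empty] at hsup
            exact absurd (hsup ▸ hslo) (lt_irrefl _)
          obtain ⟨i, _, hi⟩ := Finset.exists_mem_eq_sup Finset.univ hne
            (fun i => ‖bH.repr g i‖₊ * x ↑(bH i))
          rw [hi] at hsup
          have hci : bH.repr g i ≠ 0 := by
            intro h0
            rw [h0] at hsup
            simp at hsup
            exact absurd (hsup ▸ hslo) (lt_irrefl _)
          obtain ⟨m, hm⟩ := hqmem _ hci
          exact ⟨i, m, by rw [hsup, hm]⟩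
        have hFfin : F.Finite := by
          have hsub : F ⊆ ⋃ i : Fin n, (fun m : ℤ => qn ^ m * x ↑(bH i)) ''
              {m : ℤ | lo ≤ qn ^ m * x ↑(bH i) ∧ qn ^ m * x ↑(bH i) ≤ x v} := by
            intro s hs
            obtain ⟨i, m, hm⟩ := hFD s hs
            apply Set.mem_iUnion.mpr
            refine ⟨i, m, ?_, hm.symm⟩
            constructor
            · rw [← hm]; exact hFlo s hs
            · rw [← hm]; exact hs.2
          apply Set.Finite.subset _ hsub
          apply Set.finite_iUnion
          intro i
          apply Set.Finite.image
          apply finite_zpow_set hqn1 _ hlo0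
          have : (↑(bH i) : V) ≠ 0 := by
            intro h0
            exact bH.ne_zero i (by exact_mod_cast Subtype.ext h0)
          rcases eq_or_lt_of_le (zero_le : (0 : NNReal) ≤ x ↑(bH i)) with h | h
          · exact absurd (hker' _ h.symm) this
          · exact h
        obtain ⟨s₀, hs₀F, hs₀min⟩ := Set.exists_min_image F id hFfin hFne
        obtain ⟨⟨h₀, hh₀, hxh₀⟩, hle₀⟩ := hs₀F
        obtain ⟨h, hh, hlt⟩ := hno h₀ hh₀
        have hmem : x (v - h) ∈ F := ⟨⟨h, hh, rfl⟩, le_trans (le_of_lt (hxh₀ ▸ hlt)) hle₀⟩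
        have := hs₀min _ hmem
        rw [hxh₀] at hlt
        exact absurd (lt_of_le_of_lt this hlt) (lt_irrefl _)
      obtain ⟨h₀, hh₀, hmin'⟩ := hmin
      set u : V := v - h₀ with hudef
      have huH : u ∉ H := by
        intro hmem
        apply hvH
        have : v = u + h₀ := by rw [hudef]; abel
        rw [this]
        exact H.add_mem hmem hh₀
      have hkey : ∀ (a : k) (h : V), h ∈ H → x (a • u + h) = max (‖a‖₊ * x u) (x h) := by
        intro a h hh
        by_cases ha : a = 0
        · subst ha
          simp [hx0]
        · have h1 : ‖a‖₊ * x u ≤ x (a • u + h) := by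
            have e1 : a • u + h = a • (v - (h₀ - a⁻¹ • h)) := by
              simp only [hudef, smul_sub, smul_inv_smul₀ ha]
              abel
            have hmem' : h₀ - a⁻¹ • h ∈ H := H.sub_mem hh₀ (H.smul_mem _ hh)
            rw [e1, hsmul]
            exact mul_le_mul_right (hmin' _ hmem') _
          have h2 : x h ≤ x (a • u + h) := by
            have e2 : h = (a • u + h) + -(a • u) := by abel
            calc x h = x ((a • u + h) + -(a • u)) := by rw [← e2]
              _ ≤ max (x (a • u + h)) (x (-(a • u))) := hmax _ _
              _ = x (a • u + h) := by
                  rw [hneg, hsmul]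
                  exact max_eq_left (le_trans h1 le_rfl) |>.symm ▸ max_eq_left h1
          refine le_antisymm ?_ (max_le h1 h2)
          calc x (a • u + h) ≤ max (x (a • u)) (x h) := hmax _ _
            _ = max (‖a‖₊ * x u) (x h) := by rw [hsmul]
      exact diag_step x hrank H hH u huH bH hbH hkey

end Main

/-- Bruhat–Tits / Goldman–Iwahori: over a complete field `k` with a nontrivial
discrete non-Archimedean absolute value, every non-zero seminorm `x` on a finite-dimensional
`k`-vector space `V` is diagonalizable: there is a basis `(e₀,…,e_d)` of `V` with
`x(∑ aᵢ eᵢ) = maxᵢ ‖aᵢ‖ · x(eᵢ)`. -/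
theorem seminorm_diagonalizable
    {k : Type*} [NontriviallyNormedField k] [CompleteSpace k]
    (hna : ∀ a b : k, ‖a + b‖ ≤ max ‖a‖ ‖b‖)
    (hdisc : ∃ q : ℝ, 1 < q ∧ ∀ a : k, a ≠ 0 → ∃ m : ℤ, ‖a‖ = q ^ m)
    {V : Type*} [AddCommGroup V] [Module k V] [FiniteDimensional k V]
    (x : V → NNReal)
    (hsmul : ∀ (a : k) (v : V), x (a • v) = ‖a‖₊ * x v)
    (hmax : ∀ v w : V, x (v + w) ≤ max (x v) (x w))
    (hx : ∃ v, x v ≠ 0) :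
    ∃ (n : ℕ) (b : Basis (Fin (n + 1)) k V),
      ∀ c : Fin (n + 1) → k,
        x (∑ i, c i • b i) = Finset.univ.sup (fun i => ‖c i‖₊ * x (b i)) := by
  obtain ⟨v, hv⟩ := hx
  have hx0 : x 0 = 0 := by simpa using hsmul 0 0
  have hv0 : v ≠ 0 := fun h => hv (h ▸ hx0)
  haveI : Nontrivial V := ⟨v, 0, hv0⟩
  have hpos : 0 < Module.finrank k V := Module.finrank_pos
  obtain ⟨n, hn⟩ : ∃ n, Module.finrank k V = n + 1 :=
    ⟨Module.finrank k V - 1, (Nat.succ_pred_eq_of_pos hpos).symm⟩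
  obtain ⟨b, hb⟩ := diag_rec hdisc (n + 1) V x hsmul hmax hn
  exact ⟨n, b, hb⟩
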